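/- Slepian–Wolf metaconverse for a doubly symmetric binary source: Fix n ≥ 1, 0 < p < 1/2, positive integers M₁, M₂, and β > 0. Let S₁ = S₂ = {0,1}ⁿ and P(s₁,s₂) = 2^{−n}·p^{d(s₁,s₂)}·(1−p)^{n−d(s₁,s₂)}, where d(·,·) is the Hamming distance. Then for every Slepian–Wolf code (f₁ : {0,1}ⁿ → Fin M₁, f₂ : {0,1}ⁿ → Fin M₂, g : Fin M₁ × Fin M₂ → {0,1}ⁿ × {0,1}ⁿ), the error probability satisfies: error ≥ ∑_{k=0}^{n} C(n,k) · min{ p^k(1−p)^{n−k}, 2^{−β}/M₁ + 2^{−β}/M₂ + 2^{n−β}/(M₁M₂) } − M₁·2ⁿ·max_{0≤k≤n} min{ p^k(1−p)^{n−k}/2ⁿ, 2^{−β}/(2ⁿM₁) } − M₂·2ⁿ·max_{0≤k≤n} min{ p^k(1−p)^{n−k}/2ⁿ, 2^{−β}/(2ⁿM₂) } − M₁M₂·max_{0≤k≤n} min{ p^k(1−p)^{n−k}/2ⁿ, 2^{−β}/(M₁M₂) }, where C(n,k) is the binomial coefficient. -/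

import Mathlib

open Finset
open scoped Classical

lemma aux_min_add (x u v : ℝ) (hx : 0 ≤ x) (hu : 0 ≤ u) (hv : 0 ≤ v) :
    min x (u + v) ≤ min x u + min x v := by
  rcases le_total x u with h | h
  · have h1 : min x u = x := min_eq_left h
    have h2 : 0 ≤ min x v := le_min hx hv
    have h3 := min_le_left x (u + v)
    linarith
  · have h1 : min x u = u := min_eq_right h
    rcases le_total x v with h3 | h3
    · have h4 : min x v = x := min_eq_left h3
      have h5 := min_le_left x (u + v)
      linarith
    · have h4 : min x v = v := min_eq_right h3
      have h5 := min_le_right x (u + v)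
      linarith

lemma aux_min_add3 (x a b c : ℝ) (hx : 0 ≤ x) (ha : 0 ≤ a) (hb : 0 ≤ b) (hc : 0 ≤ c) :
    min x (a + b + c) ≤ min x a + min x b + min x c := by
  have h1 := aux_min_add x (a + b) c hx (by linarith) hc
  have h2 := aux_min_add x a b hx ha hb
  linarith

lemma aux_filter_flip {n : ℕ} (s₁ : Fin n → Fin 2) (t : Finset (Fin n)) :
    (Finset.univ.filter fun i => s₁ i ≠ (if i ∈ t then s₁ i + 1 else s₁ i)) = t := by
  ext i
  simp only [Finset.mem_filter, Finset.mem_univ, true_and]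
  by_cases hi : i ∈ t
  · simp only [hi, if_true, iff_true]
    exact fun h => (by decide : ∀ a : Fin 2, a ≠ a + 1) (s₁ i) h
  · simp [hi]

lemma aux_card_hamming {n : ℕ} (s₁ : Fin n → Fin 2) (k : ℕ) :
    ((Finset.univ : Finset (Fin n → Fin 2)).filter fun s₂ => hammingDist s₁ s₂ = k).card
      = n.choose k := by
  have hpc : (Finset.powersetCard k (Finset.univ : Finset (Fin n))).card = n.choose k := by
    simp [Finset.card_powersetCard]
  rw [← hpc]
  apply Finset.card_nbij' (i := fun s₂ => Finset.univ.filter fun i => s₁ i ≠ s₂ i)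
    (j := fun t i => if i ∈ t then s₁ i + 1 else s₁ i)
  · intro s₂ hs
    rw [Finset.mem_coe, Finset.mem_filter] at hs
    rw [Finset.mem_coe, Finset.mem_powersetCard]
    exact ⟨Finset.subset_univ _, hs.2 ▸ rfl⟩
  · intro t ht
    rw [Finset.mem_coe, Finset.mem_powersetCard] at ht
    rw [Finset.mem_coe, Finset.mem_filter]
    refine ⟨Finset.mem_univ _, ?_⟩
    show (Finset.univ.filter fun i => s₁ i ≠ _).card = k
    rw [aux_filter_flip s₁ t]
    exact ht.2
  · intro s₂ _
    funext i
    by_cases h : s₁ i = s₂ i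
    · simp [h]
    · simp only [Finset.mem_filter, Finset.mem_univ, true_and, h, if_pos, not_false_iff]
      rw [if_pos h]
      exact (by decide : ∀ a b : Fin 2, a ≠ b → a + 1 = b) _ _ h
  · intro t _
    exact aux_filter_flip s₁ t

lemma aux_sum_hamming {n : ℕ} (s₁ : Fin n → Fin 2) (F : ℕ → ℝ) :
    ∑ s₂ : Fin n → Fin 2, F (hammingDist s₁ s₂)
      = ∑ k ∈ Finset.range (n + 1), (n.choose k : ℝ) * F k := by
  rw [← Finset.sum_fiberwise_of_maps_to' (g := fun s₂ => hammingDist s₁ s₂)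
      (t := Finset.range (n + 1))
      (fun s₂ _ => Finset.mem_range.2 (Nat.lt_succ_of_le
        (hammingDist_le_card_fintype.trans (by simp)))) F]
  refine Finset.sum_congr rfl fun k _ => ?_
  rw [Finset.sum_const, aux_card_hamming, nsmul_eq_mul]

/-- Bound for a sum over a filtered finset with small cardinality. -/
lemma aux_filter_sum_le {ι : Type*} [Fintype ι] (s : Finset ι) (φ : ι → ℝ) (B : ℝ)
    (M : ℕ) (hB : 0 ≤ B) (hφ : ∀ x ∈ s, φ x ≤ B) (hcard : s.card ≤ M) :
    ∑ x ∈ s, φ x ≤ (M : ℝ) * B := by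
  calc ∑ x ∈ s, φ x ≤ s.card • B := Finset.sum_le_card_nsmul s φ B hφ
    _ = (s.card : ℝ) * B := nsmul_eq_mul _ _
    _ ≤ (M : ℝ) * B := mul_le_mul_of_nonneg_right (Nat.cast_le.2 hcard) hB

theorem dsbs_slepian_wolf_metaconverse
    (n : ℕ) (hn : 1 ≤ n) (p : ℝ) (hp0 : 0 < p) (hp : p < 1/2)
    (M₁ M₂ : ℕ) (hM₁ : 0 < M₁) (hM₂ : 0 < M₂)
    (β : ℝ) (hβ : 0 < β)
    (P : (Fin n → Fin 2) → (Fin n → Fin 2) → ℝ)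
    (hPdef : ∀ s₁ s₂, P s₁ s₂ =
      (2:ℝ)⁻¹ ^ n * p ^ (hammingDist s₁ s₂) * (1 - p) ^ (n - hammingDist s₁ s₂))
    (f₁ : (Fin n → Fin 2) → Fin M₁) (f₂ : (Fin n → Fin 2) → Fin M₂)
    (g : Fin M₁ → Fin M₂ → (Fin n → Fin 2) × (Fin n → Fin 2)) :
    ∑ s₁, ∑ s₂, P s₁ s₂ * (if g (f₁ s₁) (f₂ s₂) ≠ (s₁, s₂) then (1:ℝ) else 0) ≥
      (∑ k ∈ Finset.range (n + 1), (n.choose k : ℝ) *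
        min (p ^ k * (1 - p) ^ (n - k))
          ((2:ℝ) ^ (-β) / M₁ + (2:ℝ) ^ (-β) / M₂ +
            (2:ℝ) ^ ((n:ℝ) - β) / (M₁ * M₂))) -
      M₁ * (2:ℝ) ^ n * ((Finset.range (n + 1)).sup' (Finset.nonempty_range_add_one)
        (fun k => min (p ^ k * (1 - p) ^ (n - k) / (2:ℝ) ^ n)
          ((2:ℝ) ^ (-β) / ((2:ℝ) ^ n * M₁)))) -
      M₂ * (2:ℝ) ^ n * ((Finset.range (n + 1)).sup' (Finset.nonempty_range_add_one)
        (fun k => min (p ^ k * (1 - p) ^ (n - k) / (2:ℝ) ^ n)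
          ((2:ℝ) ^ (-β) / ((2:ℝ) ^ n * M₂)))) -
      M₁ * M₂ * ((Finset.range (n + 1)).sup' (Finset.nonempty_range_add_one)
        (fun k => min (p ^ k * (1 - p) ^ (n - k) / (2:ℝ) ^ n)
          ((2:ℝ) ^ (-β) / (M₁ * M₂)))) := by
  classical
  have hq : 0 < 1 - p := by linarith
  have h2n : (0:ℝ) < (2:ℝ) ^ n := by positivity
  have hM₁' : (0:ℝ) < (M₁ : ℝ) := by exact_mod_cast hM₁
  have hM₂' : (0:ℝ) < (M₂ : ℝ) := by exact_mod_cast hM₂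
  have hrb : (0:ℝ) < (2:ℝ) ^ (-β) := Real.rpow_pos_of_pos two_pos _
  set c₁ : ℝ := (2:ℝ) ^ (-β) / ((2:ℝ) ^ n * (M₁:ℝ)) with hc₁def
  set c₂ : ℝ := (2:ℝ) ^ (-β) / ((2:ℝ) ^ n * (M₂:ℝ)) with hc₂def
  set c₃ : ℝ := (2:ℝ) ^ (-β) / ((M₁:ℝ) * (M₂:ℝ)) with hc₃def
  have hc₁ : 0 < c₁ := by rw [hc₁def]; positivity
  have hc₂ : 0 < c₂ := by rw [hc₂def]; positivity
  have hc₃ : 0 < c₃ := by rw [hc₃def]; positivity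
  have hPpos : ∀ s₁ s₂, 0 < P s₁ s₂ := fun s₁ s₂ => by rw [hPdef]; positivity
  set B₁ : ℝ := (Finset.range (n + 1)).sup' Finset.nonempty_range_add_one
    (fun k => min (p ^ k * (1 - p) ^ (n - k) / (2:ℝ) ^ n) c₁) with hB₁def
  set B₂ : ℝ := (Finset.range (n + 1)).sup' Finset.nonempty_range_add_one
    (fun k => min (p ^ k * (1 - p) ^ (n - k) / (2:ℝ) ^ n) c₂) with hB₂def
  set B₃ : ℝ := (Finset.range (n + 1)).sup' Finset.nonempty_range_add_one
    (fun k => min (p ^ k * (1 - p) ^ (n - k) / (2:ℝ) ^ n) c₃) with hB₃def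
  have hB₁0 : 0 ≤ B₁ := le_trans (by positivity)
    (Finset.le_sup' (f := fun k => min (p ^ k * (1 - p) ^ (n - k) / (2:ℝ) ^ n) c₁)
      (Finset.mem_range.2 n.succ_pos))
  have hB₂0 : 0 ≤ B₂ := le_trans (by positivity)
    (Finset.le_sup' (f := fun k => min (p ^ k * (1 - p) ^ (n - k) / (2:ℝ) ^ n) c₂)
      (Finset.mem_range.2 n.succ_pos))
  have hB₃0 : 0 ≤ B₃ := le_trans (by positivity)
    (Finset.le_sup' (f := fun k => min (p ^ k * (1 - p) ^ (n - k) / (2:ℝ) ^ n) c₃)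
      (Finset.mem_range.2 n.succ_pos))
  -- pointwise bounds for the clipped measures by the sups
  have hmem : ∀ (s₁ s₂ : Fin n → Fin 2), hammingDist s₁ s₂ ∈ Finset.range (n + 1) :=
    fun s₁ s₂ => Finset.mem_range.2 (Nat.lt_succ_of_le (hammingDist_le_card_fintype.trans (by simp)))
  have hPval : ∀ (s₁ s₂ : Fin n → Fin 2),
      P s₁ s₂ = p ^ (hammingDist s₁ s₂) * (1 - p) ^ (n - hammingDist s₁ s₂) / (2:ℝ) ^ n := by
    intro s₁ s₂
    rw [hPdef, inv_pow]
    ring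
  have hφB : ∀ (c : ℝ) (s₁ s₂ : Fin n → Fin 2),
      min (P s₁ s₂) c ≤ (Finset.range (n + 1)).sup' Finset.nonempty_range_add_one
        (fun k => min (p ^ k * (1 - p) ^ (n - k) / (2:ℝ) ^ n) c) := by
    intro c s₁ s₂
    refine le_trans (le_of_eq ?_)
      (Finset.le_sup' (f := fun k => min (p ^ k * (1 - p) ^ (n - k) / (2:ℝ) ^ n) c)
        (hmem s₁ s₂))
    rw [hPval]
  -- Step 1 : lower bound the error by ∑∑ φ - ∑∑ φ·cind
  have step1 : ∑ s₁, ∑ s₂, (min (P s₁ s₂) (c₁ + c₂ + c₃)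
        - min (P s₁ s₂) (c₁ + c₂ + c₃) * (if g (f₁ s₁) (f₂ s₂) = (s₁, s₂) then (1:ℝ) else 0))
      ≤ ∑ s₁, ∑ s₂, P s₁ s₂ * (if g (f₁ s₁) (f₂ s₂) ≠ (s₁, s₂) then (1:ℝ) else 0) := by
    refine Finset.sum_le_sum fun s₁ _ => Finset.sum_le_sum fun s₂ _ => ?_
    by_cases h : g (f₁ s₁) (f₂ s₂) = (s₁, s₂)
    · simp [h]
    · simpa [h] using min_le_left (P s₁ s₂) (c₁ + c₂ + c₃)
  -- Step 2 : compute ∑∑ φ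
  have hD : ∀ k ∈ Finset.range (n + 1),
      (2:ℝ) ^ n * ((n.choose k : ℝ) * min ((2:ℝ)⁻¹ ^ n * p ^ k * (1 - p) ^ (n - k)) (c₁ + c₂ + c₃))
      = (n.choose k : ℝ) * min (p ^ k * (1 - p) ^ (n - k))
          ((2:ℝ) ^ (-β) / M₁ + (2:ℝ) ^ (-β) / M₂ + (2:ℝ) ^ ((n:ℝ) - β) / (M₁ * M₂)) := by
    intro k _
    have hmin : (2:ℝ) ^ n * min ((2:ℝ)⁻¹ ^ n * p ^ k * (1 - p) ^ (n - k)) (c₁ + c₂ + c₃)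
        = min ((2:ℝ)⁻¹ ^ n * p ^ k * (1 - p) ^ (n - k) * (2:ℝ) ^ n)
            ((c₁ + c₂ + c₃) * (2:ℝ) ^ n) := by
      rw [← min_mul_of_nonneg ((2:ℝ)⁻¹ ^ n * p ^ k * (1 - p) ^ (n - k)) (c₁ + c₂ + c₃) h2n.le]; ring
    rw [show (2:ℝ) ^ n * ((n.choose k : ℝ) * min ((2:ℝ)⁻¹ ^ n * p ^ k * (1 - p) ^ (n - k)) (c₁ + c₂ + c₃))
        = (n.choose k : ℝ) * ((2:ℝ) ^ n * min ((2:ℝ)⁻¹ ^ n * p ^ k * (1 - p) ^ (n - k)) (c₁ + c₂ + c₃)) from by ring,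
      hmin]
    congr 1
    congr 1
    · rw [inv_pow]
      field_simp
    · rw [hc₁def, hc₂def, hc₃def, sub_eq_add_neg, Real.rpow_add two_pos, Real.rpow_natCast]
      field_simp
  have step2 : ∑ s₁ : Fin n → Fin 2, ∑ s₂ : Fin n → Fin 2, min (P s₁ s₂) (c₁ + c₂ + c₃)
      = ∑ k ∈ Finset.range (n + 1), (n.choose k : ℝ) *
          min (p ^ k * (1 - p) ^ (n - k))
            ((2:ℝ) ^ (-β) / M₁ + (2:ℝ) ^ (-β) / M₂ + (2:ℝ) ^ ((n:ℝ) - β) / (M₁ * M₂)) := by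
    have hinner : ∀ s₁ : Fin n → Fin 2, ∑ s₂ : Fin n → Fin 2, min (P s₁ s₂) (c₁ + c₂ + c₃)
        = ∑ k ∈ Finset.range (n + 1), (n.choose k : ℝ) *
            min ((2:ℝ)⁻¹ ^ n * p ^ k * (1 - p) ^ (n - k)) (c₁ + c₂ + c₃) := by
      intro s₁
      rw [← aux_sum_hamming s₁
        (fun k => min ((2:ℝ)⁻¹ ^ n * p ^ k * (1 - p) ^ (n - k)) (c₁ + c₂ + c₃))]
      exact Finset.sum_congr rfl fun s₂ _ => by rw [hPdef]
    rw [Finset.sum_congr rfl fun s₁ _ => hinner s₁, Finset.sum_const, Finset.card_univ]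
    rw [nsmul_eq_mul]
    have hcard : ((Fintype.card (Fin n → Fin 2) : ℕ) : ℝ) = (2:ℝ) ^ n := by
      simp [Fintype.card_fun]
    rw [hcard, Finset.mul_sum]
    exact Finset.sum_congr rfl hD
  -- Step 3 : bound the sums of clipped measures over the correct set
  have hS₁ : ∑ s₁ : Fin n → Fin 2, ∑ s₂ : Fin n → Fin 2,
      min (P s₁ s₂) c₁ * (if g (f₁ s₁) (f₂ s₂) = (s₁, s₂) then (1:ℝ) else 0)
      ≤ (M₁ : ℝ) * (2:ℝ) ^ n * B₁ := by
    rw [Finset.sum_comm]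
    have hbnd : ∀ s₂ : Fin n → Fin 2, ∑ s₁ : Fin n → Fin 2,
        min (P s₁ s₂) c₁ * (if g (f₁ s₁) (f₂ s₂) = (s₁, s₂) then (1:ℝ) else 0)
        ≤ (M₁ : ℝ) * B₁ := by
      intro s₂
      have hrw : ∑ s₁ : Fin n → Fin 2,
          min (P s₁ s₂) c₁ * (if g (f₁ s₁) (f₂ s₂) = (s₁, s₂) then (1:ℝ) else 0)
          = ∑ s₁ ∈ Finset.univ.filter (fun s₁ => g (f₁ s₁) (f₂ s₂) = (s₁, s₂)),
              min (P s₁ s₂) c₁ := by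
        rw [Finset.sum_filter]
        exact Finset.sum_congr rfl fun s₁ _ => by
          by_cases h : g (f₁ s₁) (f₂ s₂) = (s₁, s₂) <;> simp [h]
      rw [hrw]
      refine aux_filter_sum_le _ _ _ _ hB₁0 (fun s₁ _ => hφB c₁ s₁ s₂) ?_
      refine le_trans (Finset.card_le_card_of_injOn (t := (Finset.univ : Finset (Fin M₁)))
        (fun s₁ => f₁ s₁) (fun a _ => Finset.mem_univ (f₁ a)) ?_) (by simp)
      intro a ha b hb hab
      simp only [Finset.coe_filter, Set.mem_setOf_eq, Finset.mem_univ, true_and] at ha hb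
      have hab' : f₁ a = f₁ b := hab
      have : (a, s₂) = (b, s₂) := by rw [← ha, ← hb, hab']
      exact congrArg Prod.fst this
    calc ∑ s₂ : Fin n → Fin 2, ∑ s₁ : Fin n → Fin 2,
          min (P s₁ s₂) c₁ * (if g (f₁ s₁) (f₂ s₂) = (s₁, s₂) then (1:ℝ) else 0)
        ≤ ∑ _s₂ : Fin n → Fin 2, (M₁ : ℝ) * B₁ := Finset.sum_le_sum fun s₂ _ => hbnd s₂
      _ = (M₁ : ℝ) * (2:ℝ) ^ n * B₁ := by
          rw [Finset.sum_const, Finset.card_univ, nsmul_eq_mul]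
          have hcard : ((Fintype.card (Fin n → Fin 2) : ℕ) : ℝ) = (2:ℝ) ^ n := by
            simp [Fintype.card_fun]
          rw [hcard]; ring
  have hS₂ : ∑ s₁ : Fin n → Fin 2, ∑ s₂ : Fin n → Fin 2,
      min (P s₁ s₂) c₂ * (if g (f₁ s₁) (f₂ s₂) = (s₁, s₂) then (1:ℝ) else 0)
      ≤ (M₂ : ℝ) * (2:ℝ) ^ n * B₂ := by
    have hbnd : ∀ s₁ : Fin n → Fin 2, ∑ s₂ : Fin n → Fin 2,
        min (P s₁ s₂) c₂ * (if g (f₁ s₁) (f₂ s₂) = (s₁, s₂) then (1:ℝ) else 0)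
        ≤ (M₂ : ℝ) * B₂ := by
      intro s₁
      have hrw : ∑ s₂ : Fin n → Fin 2,
          min (P s₁ s₂) c₂ * (if g (f₁ s₁) (f₂ s₂) = (s₁, s₂) then (1:ℝ) else 0)
          = ∑ s₂ ∈ Finset.univ.filter (fun s₂ => g (f₁ s₁) (f₂ s₂) = (s₁, s₂)),
              min (P s₁ s₂) c₂ := by
        rw [Finset.sum_filter]
        exact Finset.sum_congr rfl fun s₂ _ => by
          by_cases h : g (f₁ s₁) (f₂ s₂) = (s₁, s₂) <;> simp [h]
      rw [hrw]
      refine aux_filter_sum_le _ _ _ _ hB₂0 (fun s₂ _ => hφB c₂ s₁ s₂) ?_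
      refine le_trans (Finset.card_le_card_of_injOn (t := (Finset.univ : Finset (Fin M₂)))
        (fun s₂ => f₂ s₂) (fun a _ => Finset.mem_univ (f₂ a)) ?_) (by simp)
      intro a ha b hb hab
      simp only [Finset.coe_filter, Set.mem_setOf_eq, Finset.mem_univ, true_and] at ha hb
      have hab' : f₂ a = f₂ b := hab
      have : (s₁, a) = (s₁, b) := by rw [← ha, ← hb, hab']
      exact congrArg Prod.snd this
    calc ∑ s₁ : Fin n → Fin 2, ∑ s₂ : Fin n → Fin 2,
          min (P s₁ s₂) c₂ * (if g (f₁ s₁) (f₂ s₂) = (s₁, s₂) then (1:ℝ) else 0)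
        ≤ ∑ _s₁ : Fin n → Fin 2, (M₂ : ℝ) * B₂ := Finset.sum_le_sum fun s₁ _ => hbnd s₁
      _ = (M₂ : ℝ) * (2:ℝ) ^ n * B₂ := by
          rw [Finset.sum_const, Finset.card_univ, nsmul_eq_mul]
          have hcard : ((Fintype.card (Fin n → Fin 2) : ℕ) : ℝ) = (2:ℝ) ^ n := by
            simp [Fintype.card_fun]
          rw [hcard]; ring
  have hS₃ : ∑ s₁ : Fin n → Fin 2, ∑ s₂ : Fin n → Fin 2,
      min (P s₁ s₂) c₃ * (if g (f₁ s₁) (f₂ s₂) = (s₁, s₂) then (1:ℝ) else 0)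
      ≤ (M₁ : ℝ) * (M₂ : ℝ) * B₃ := by
    rw [← Finset.sum_product']
    have hrw : ∑ q ∈ (Finset.univ : Finset (Fin n → Fin 2)) ×ˢ (Finset.univ : Finset (Fin n → Fin 2)),
        min (P q.1 q.2) c₃ * (if g (f₁ q.1) (f₂ q.2) = (q.1, q.2) then (1:ℝ) else 0)
        = ∑ q ∈ (Finset.univ ×ˢ Finset.univ).filter
            (fun q : (Fin n → Fin 2) × (Fin n → Fin 2) => g (f₁ q.1) (f₂ q.2) = (q.1, q.2)),
            min (P q.1 q.2) c₃ := by
      rw [Finset.sum_filter]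
      exact Finset.sum_congr rfl fun q _ => by
        by_cases h : g (f₁ q.1) (f₂ q.2) = (q.1, q.2) <;> simp [h]
    rw [hrw]
    have hc' : ((M₁ : ℝ) * (M₂ : ℝ)) = ((M₁ * M₂ : ℕ) : ℝ) := by push_cast; ring
    rw [hc']
    refine aux_filter_sum_le _ _ _ _ hB₃0 (fun q _ => hφB c₃ q.1 q.2) ?_
    refine le_trans (Finset.card_le_card_of_injOn (t := (Finset.univ : Finset (Fin M₁ × Fin M₂)))
      (fun q : (Fin n → Fin 2) × (Fin n → Fin 2) => (f₁ q.1, f₂ q.2))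
      (fun a _ => Finset.mem_univ _) ?_) (by simp)
    intro a ha b hb hab
    simp only [Finset.coe_filter, Set.mem_setOf_eq] at ha hb
    have h1 : g (f₁ a.1) (f₂ a.2) = (a.1, a.2) := ha.2
    have h2 : g (f₁ b.1) (f₂ b.2) = (b.1, b.2) := hb.2
    have hab1 : f₁ a.1 = f₁ b.1 := congrArg Prod.fst hab
    have hab2 : f₂ a.2 = f₂ b.2 := congrArg Prod.snd hab
    have heq : (a.1, a.2) = (b.1, b.2) := by rw [← h1, ← h2, hab1, hab2]
    exact Prod.ext (congrArg Prod.fst heq) (congrArg Prod.snd heq)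
  -- Step 4 : split φ ≤ φ₁ + φ₂ + φ₃ on the correct set
  have hsplit : ∑ s₁ : Fin n → Fin 2, ∑ s₂ : Fin n → Fin 2,
      min (P s₁ s₂) (c₁ + c₂ + c₃) * (if g (f₁ s₁) (f₂ s₂) = (s₁, s₂) then (1:ℝ) else 0)
      ≤ (∑ s₁ : Fin n → Fin 2, ∑ s₂ : Fin n → Fin 2,
          min (P s₁ s₂) c₁ * (if g (f₁ s₁) (f₂ s₂) = (s₁, s₂) then (1:ℝ) else 0))
        + (∑ s₁ : Fin n → Fin 2, ∑ s₂ : Fin n → Fin 2,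
          min (P s₁ s₂) c₂ * (if g (f₁ s₁) (f₂ s₂) = (s₁, s₂) then (1:ℝ) else 0))
        + (∑ s₁ : Fin n → Fin 2, ∑ s₂ : Fin n → Fin 2,
          min (P s₁ s₂) c₃ * (if g (f₁ s₁) (f₂ s₂) = (s₁, s₂) then (1:ℝ) else 0)) := by
    rw [← Finset.sum_add_distrib, ← Finset.sum_add_distrib]
    refine Finset.sum_le_sum fun s₁ _ => ?_
    rw [← Finset.sum_add_distrib, ← Finset.sum_add_distrib]
    refine Finset.sum_le_sum fun s₂ _ => ?_
    by_cases h : g (f₁ s₁) (f₂ s₂) = (s₁, s₂)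
    · simp only [h, if_pos, mul_one]
      exact aux_min_add3 _ _ _ _ (hPpos s₁ s₂).le hc₁.le hc₂.le hc₃.le
    · simp [h]
  -- Combine
  rw [ge_iff_le]
  have hsub : ∑ s₁ : Fin n → Fin 2, ∑ s₂ : Fin n → Fin 2,
      (min (P s₁ s₂) (c₁ + c₂ + c₃)
        - min (P s₁ s₂) (c₁ + c₂ + c₃) * (if g (f₁ s₁) (f₂ s₂) = (s₁, s₂) then (1:ℝ) else 0))
      = (∑ s₁ : Fin n → Fin 2, ∑ s₂ : Fin n → Fin 2, min (P s₁ s₂) (c₁ + c₂ + c₃))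
        - ∑ s₁ : Fin n → Fin 2, ∑ s₂ : Fin n → Fin 2,
            min (P s₁ s₂) (c₁ + c₂ + c₃) * (if g (f₁ s₁) (f₂ s₂) = (s₁, s₂) then (1:ℝ) else 0) := by
    rw [← Finset.sum_sub_distrib]
    exact Finset.sum_congr rfl fun s₁ _ => by rw [← Finset.sum_sub_distrib]
  rw [hsub] at step1
  rw [step2] at step1
  linarith [hS₁, hS₂, hS₃, hsplit, step1]
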